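/- Let P be a finite set of primes, ℓ a positive integer, c > 0 and λ completely multiplicative with |λ(p)| ≤ 2. Then the sum over integers n supported on P with Ω(n) > ℓ of λ(n)² c^{Ω(n)}/(n w(n)²) is at most 2^{−ℓ} ∏_{p∈P} exp(2c·λ(p)²/p + O(1/p²)). -/

import Mathlib

/-- The multiplicative function `w` with `w(p^α) = α!`. -/
def wfun (n : ℕ) : ℕ := n.factorization.prod fun _ k => k.factorial

private lemma omega_eq_sum (n : ℕ) :
    n.primeFactorsList.length = n.factorization.sum fun _ k => k := by
  rw [Finsupp.sum, Nat.support_factorization]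
  simp only [← Nat.primeFactorsList_count_eq]
  have h : n.primeFactors = (↑n.primeFactorsList : Multiset ℕ).toFinset := rfl
  rw [h]
  simp only [← Multiset.coe_count]
  rw [Multiset.toFinset_sum_count_eq, Multiset.coe_card]

theorem stmt_11 (c : ℝ) (hc : 0 < c) :
    ∃ C : ℝ, 0 < C ∧ ∀ (P : Finset ℕ) (ℓ : ℕ) (lam : ℕ → ℝ),
      (∀ p ∈ P, p.Prime) → 0 < ℓ → lam 1 = 1 →
      (∀ m n : ℕ, lam (m * n) = lam m * lam n) → (∀ p : ℕ, p.Prime → |lam p| ≤ 2) →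
      (∑' n : ℕ, if 0 < n ∧ (∀ p ∈ n.primeFactors, p ∈ P) ∧ ℓ < n.primeFactorsList.length
            then lam n ^ 2 * c ^ n.primeFactorsList.length / ((n : ℝ) * (wfun n : ℝ) ^ 2)
            else 0)
        ≤ (2 : ℝ) ^ (-(ℓ : ℝ)) * ∏ p ∈ P, Real.exp (2 * c * lam p ^ 2 / (p : ℝ) + C / (p : ℝ) ^ 2) := by
  classical
  refine ⟨1, one_pos, ?_⟩
  intro P ℓ lam hP hℓ h1 hmul _hbd
  set L : ℕ →* ℝ := { toFun := lam, map_one' := h1, map_mul' := fun m n => hmul m n } with hLdef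
  set x : ℕ → ℝ := fun p => 2 * c * lam p ^ 2 / p with hxdef
  have hx0 : ∀ p : ℕ, 0 ≤ x p := by
    intro p
    have : (0:ℝ) ≤ (p : ℝ) := Nat.cast_nonneg p
    have h2c : (0:ℝ) ≤ 2 * c := by linarith
    exact div_nonneg (mul_nonneg h2c (sq_nonneg _)) this
  set h : ℕ → ℕ → ℝ := fun p k => x p ^ k / ((k.factorial : ℝ)) ^ 2 with hhdef
  have hh0 : ∀ p k, 0 ≤ h p k := by
    intro p k
    exact div_nonneg (pow_nonneg (hx0 p) _) (sq_nonneg _)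
  set F : ℕ → ℝ := fun n =>
    lam n ^ 2 * (2 * c) ^ n.primeFactorsList.length / ((n : ℝ) * (wfun n : ℝ) ^ 2) with hFdef
  have hF0 : ∀ n : ℕ, 0 ≤ F n := by
    intro n
    have h2c : (0:ℝ) ≤ 2 * c := by linarith
    exact div_nonneg (mul_nonneg (sq_nonneg _) (pow_nonneg h2c _))
      (mul_nonneg (Nat.cast_nonneg n) (sq_nonneg _))
  -- Factorization of F over the primes of P
  have hFactor : ∀ n : ℕ, n ≠ 0 → (∀ p ∈ n.primeFactors, p ∈ P) →
      F n = ∏ p ∈ P, h p (n.factorization p) := by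
    intro n hn hsub
    have hsupp : n.factorization.support ⊆ P := by
      rw [Nat.support_factorization]; exact fun p hp => hsub p hp
    have hn' : n = ∏ p ∈ P, p ^ n.factorization p := by
      conv_lhs => rw [← Nat.factorization_prod_pow_eq_self hn]
      exact Finsupp.prod_of_support_subset _ hsupp _ (fun i _ => pow_zero i)
    have hnprod : (n:ℝ) = ∏ p ∈ P, (p:ℝ) ^ n.factorization p := by
      conv_lhs => rw [hn']
      push_cast; rfl
    have hlam : lam n = ∏ p ∈ P, lam p ^ n.factorization p := by
      have h2 : L n = ∏ p ∈ P, L p ^ n.factorization p := by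
        conv_lhs => rw [hn']
        rw [map_prod]
        exact Finset.prod_congr rfl fun p _ => map_pow L p _
      exact h2
    have hw : (wfun n : ℝ) = ∏ p ∈ P, ((n.factorization p).factorial : ℝ) := by
      have : wfun n = ∏ p ∈ P, (n.factorization p).factorial :=
        Finsupp.prod_of_support_subset _ hsupp _ (fun i _ => Nat.factorial_zero)
      rw [this]; push_cast; rfl
    have hlen : n.primeFactorsList.length = ∑ p ∈ P, n.factorization p := by
      rw [omega_eq_sum]
      exact Finsupp.sum_of_support_subset _ hsupp _ (fun i _ => rfl)
    simp only [hFdef]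
    rw [hlam, hnprod, hw, hlen, ← Finset.prod_pow_eq_pow_sum, ← Finset.prod_pow,
      ← Finset.prod_pow, ← Finset.prod_mul_distrib, ← Finset.prod_mul_distrib,
      ← Finset.prod_div_distrib]
    refine Finset.prod_congr rfl fun p _ => ?_
    simp only [hhdef, hxdef]
    rw [div_pow]
    ring
  -- per-prime sum bound
  have hsum_le : ∀ p, ∀ N : ℕ,
      ∑ k ∈ Finset.range N, h p k ≤ Real.exp (x p + 1 / (p:ℝ) ^ 2) := by
    intro p N
    calc ∑ k ∈ Finset.range N, h p k
        ≤ ∑ k ∈ Finset.range N, x p ^ k / (k.factorial : ℝ) := by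
          refine Finset.sum_le_sum fun k _ => ?_
          have h1k : (1:ℝ) ≤ (k.factorial : ℝ) := by exact_mod_cast k.factorial_pos
          have : (k.factorial : ℝ) ≤ ((k.factorial : ℝ)) ^ 2 := by nlinarith
          exact div_le_div_of_nonneg_left (pow_nonneg (hx0 p) k) (by linarith) this
      _ ≤ Real.exp (x p) := Real.sum_le_exp_of_nonneg (hx0 p) N
      _ ≤ Real.exp (x p + 1 / (p:ℝ) ^ 2) := by
          apply Real.exp_le_exp.2
          have : (0:ℝ) ≤ 1 / (p:ℝ) ^ 2 := by positivity
          linarith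
  have hrpow0 : (0:ℝ) ≤ (2:ℝ) ^ (-(ℓ:ℝ)) := Real.rpow_nonneg (by norm_num) _
  apply tsum_le_of_sum_le'
  · exact mul_nonneg hrpow0 (Finset.prod_nonneg fun p _ => (Real.exp_pos _).le)
  intro S
  set S' := S.filter (fun n : ℕ => 0 < n ∧ ∀ p ∈ n.primeFactors, p ∈ P) with hS'def
  have step1 : ∑ n ∈ S,
      (if 0 < n ∧ (∀ p ∈ n.primeFactors, p ∈ P) ∧ ℓ < n.primeFactorsList.length
        then lam n ^ 2 * c ^ n.primeFactorsList.length / ((n : ℝ) * (wfun n : ℝ) ^ 2)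
        else 0) ≤ (2:ℝ) ^ (-(ℓ:ℝ)) * ∑ n ∈ S', F n := by
    rw [← Finset.sum_filter_of_ne (p := fun n : ℕ => 0 < n ∧ ∀ p ∈ n.primeFactors, p ∈ P)
      (fun n _ hne => by
        by_contra hQ
        exact hne (if_neg (fun hcond => hQ ⟨hcond.1, hcond.2.1⟩)))]
    rw [Finset.mul_sum]
    refine Finset.sum_le_sum fun n hn => ?_
    obtain ⟨hn0, hsub⟩ := (Finset.mem_filter.1 hn).2
    by_cases hΩ : ℓ < n.primeFactorsList.length
    · rw [if_pos ⟨hn0, hsub, hΩ⟩]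
      have h2 : (2:ℝ) ^ (-(ℓ:ℝ)) = ((2:ℝ) ^ ℓ)⁻¹ := by
        rw [Real.rpow_neg (by norm_num), Real.rpow_natCast]
      have hle : (2:ℝ) ^ ℓ ≤ 2 ^ n.primeFactorsList.length :=
        pow_le_pow_right₀ (by norm_num) hΩ.le
      have ht0 : (0:ℝ) ≤ lam n ^ 2 * c ^ n.primeFactorsList.length /
          ((n : ℝ) * (wfun n : ℝ) ^ 2) :=
        div_nonneg (mul_nonneg (sq_nonneg _) (pow_nonneg hc.le _))
          (mul_nonneg (Nat.cast_nonneg n) (sq_nonneg _))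
      have key : (2:ℝ) ^ (-(ℓ:ℝ)) * F n =
          ((2:ℝ) ^ n.primeFactorsList.length / 2 ^ ℓ) *
            (lam n ^ 2 * c ^ n.primeFactorsList.length / ((n : ℝ) * (wfun n : ℝ) ^ 2)) := by
        simp only [hFdef]; rw [h2]; ring
      rw [key]
      refine le_mul_of_one_le_left ht0 ?_
      rw [le_div_iff₀ (by positivity)]
      linarith
    · rw [if_neg (fun hcond => hΩ hcond.2.2)]
      exact mul_nonneg hrpow0 (hF0 n)
  have step2 : ∑ n ∈ S', F n ≤ ∏ p ∈ P, Real.exp (x p + 1 / (p:ℝ) ^ 2) := by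
    set N := S'.sup id + 1 with hNdef
    have hrw : ∀ n ∈ S', F n = ∏ q ∈ P.attach, h q.1 (n.factorization q.1) := by
      intro n hn
      obtain ⟨hn0, hsub⟩ := (Finset.mem_filter.1 hn).2
      rw [hFactor n hn0.ne' hsub]
      exact (Finset.prod_attach P fun p => h p (n.factorization p)).symm
    rw [Finset.sum_congr rfl hrw]
    have hinj : ∀ a ∈ S', ∀ b ∈ S',
        (fun (p : ℕ) (_ : p ∈ P) => a.factorization p) =
          (fun (p : ℕ) (_ : p ∈ P) => b.factorization p) → a = b := by
      intro a ha b hb hfun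
      have ha0 : a ≠ 0 := ((Finset.mem_filter.1 ha).2.1).ne'
      have hb0 : b ≠ 0 := ((Finset.mem_filter.1 hb).2.1).ne'
      have hasub := (Finset.mem_filter.1 ha).2.2
      have hbsub := (Finset.mem_filter.1 hb).2.2
      refine Nat.factorization_inj ha0 hb0 ?_
      ext p
      by_cases hp : p ∈ P
      · exact congrFun (congrFun hfun p) hp
      · have h1 : a.factorization p = 0 := by
          rw [← Finsupp.notMem_support_iff, Nat.support_factorization]
          exact fun hmem => hp (hasub p hmem)
        have h2 : b.factorization p = 0 := by
          rw [← Finsupp.notMem_support_iff, Nat.support_factorization]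
          exact fun hmem => hp (hbsub p hmem)
        rw [h1, h2]
    rw [← Finset.sum_image (g := fun n : ℕ => fun (p : ℕ) (_ : p ∈ P) => n.factorization p)
      (f := fun e => ∏ q ∈ P.attach, h q.1 (e q.1 q.2)) hinj]
    calc ∑ e ∈ S'.image (fun n : ℕ => fun (p : ℕ) (_ : p ∈ P) => n.factorization p),
          ∏ q ∈ P.attach, h q.1 (e q.1 q.2)
        ≤ ∑ e ∈ P.pi (fun _ => Finset.range N), ∏ q ∈ P.attach, h q.1 (e q.1 q.2) := by
          refine Finset.sum_le_sum_of_subset_of_nonneg ?_ (fun e _ _ =>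
            Finset.prod_nonneg fun q _ => hh0 _ _)
          intro e he
          obtain ⟨n, hn, rfl⟩ := Finset.mem_image.1 he
          have hn0 : n ≠ 0 := ((Finset.mem_filter.1 hn).2.1).ne'
          refine Finset.mem_pi.2 fun p _ => Finset.mem_range.2 ?_
          exact Nat.lt_succ_of_le ((Nat.factorization_lt p hn0).le.trans
            (Finset.le_sup (f := id) hn))
      _ = ∏ p ∈ P, ∑ k ∈ Finset.range N, h p k :=
          (Finset.prod_sum P (fun _ => Finset.range N) (fun p k => h p k)).symm
      _ ≤ ∏ p ∈ P, Real.exp (x p + 1 / (p:ℝ) ^ 2) :=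
          Finset.prod_le_prod (fun p _ => Finset.sum_nonneg fun k _ => hh0 p k)
            (fun p _ => hsum_le p N)
  calc ∑ n ∈ S,
      (if 0 < n ∧ (∀ p ∈ n.primeFactors, p ∈ P) ∧ ℓ < n.primeFactorsList.length
        then lam n ^ 2 * c ^ n.primeFactorsList.length / ((n : ℝ) * (wfun n : ℝ) ^ 2)
        else 0)
      ≤ (2:ℝ) ^ (-(ℓ:ℝ)) * ∑ n ∈ S', F n := step1
    _ ≤ (2:ℝ) ^ (-(ℓ:ℝ)) * ∏ p ∈ P, Real.exp (x p + 1 / (p:ℝ) ^ 2) :=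
        mul_le_mul_of_nonneg_left step2 hrpow0
    _ = (2:ℝ) ^ (-(ℓ:ℝ)) * ∏ p ∈ P, Real.exp (2 * c * lam p ^ 2 / (p:ℝ) + 1 / (p:ℝ) ^ 2) := rfl
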